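/- For all real numbers γ0 > 0, a < 1, 0 < p < 1 and all integers 1 ≤ i ≤ n, one has Σ_{j=0}^{i} γ0^j · p^{−a·j} · S_a(i,j) · R_{n,γ0,a,p}(i,j) = Σ_{ℓ=0}^n γ0^ℓ · p^{−a·ℓ} · S_a(n,ℓ). -/

import Mathlib

open scoped Classical BigOperators

/-- Generalized Stirling numbers of the first kind:
`S_a(n,l) = (n!/l!) · Σ over compositions of n into l positive parts of
∏ Γ(n_k − a)/(n_k!·Γ(1−a))`. -/
noncomputable def genStirling (a : ℝ) (n l : ℕ) : ℝ :=
  (n.factorial : ℝ) / (l.factorial : ℝ) *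
    ∑ f ∈ (Finset.Nat.antidiagonalTuple l n).filter (fun f => ∀ k, 0 < f k),
      ∏ k, Real.Gamma ((f k : ℝ) - a) / ((f k).factorial * Real.Gamma (1 - a))

/-- `D_n = Σ_{ℓ=0}^n γ0^ℓ · p^{−a·ℓ} · S_a(n,ℓ)`. -/
noncomputable def Dsum (γ0 a p : ℝ) (n : ℕ) : ℝ :=
  ∑ l ∈ Finset.range (n + 1), γ0 ^ l * p ^ (-(a * (l : ℝ))) * genStirling a n l

/-- The backward recursion `R_{n,γ0,a,p}(i,j)`: `R(n,j) = 1` and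
`R(i,j) = (i − a·j)·R(i+1,j) + γ0·p^{−a}·R(i+1,j+1)` for `i < n`. -/
noncomputable def Rrec (γ0 a p : ℝ) (n : ℕ) : ℕ → ℕ → ℝ
  | i, j =>
    if _ : n ≤ i then 1
    else ((i : ℝ) - a * (j : ℝ)) * Rrec γ0 a p n (i + 1) j
      + γ0 * p ^ (-a) * Rrec γ0 a p n (i + 1) (j + 1)
  termination_by i _ => n - i
  decreasing_by all_goals omega
noncomputable def wgt (a : ℝ) (m : ℕ) : ℝ :=
  Real.Gamma ((m:ℝ) - a) / ((m.factorial : ℝ) * Real.Gamma (1 - a))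

noncomputable def Tfun (a : ℝ) : ℕ → ℕ → ℝ
  | 0, n => if n = 0 then 1 else 0
  | (l+1), n => ∑ m ∈ Finset.Icc 1 n, wgt a m * Tfun a l (n - m)

lemma Tfun_succ (a : ℝ) (l n : ℕ) :
    Tfun a (l+1) n = ∑ m ∈ Finset.Icc 1 n, wgt a m * Tfun a l (n - m) := rfl

lemma Tfun_zero (a : ℝ) (n : ℕ) : Tfun a 0 n = if n = 0 then 1 else 0 := rfl

lemma sum_tuple_succ (a : ℝ) (l n : ℕ) :
    (∑ f ∈ (Finset.Nat.antidiagonalTuple (l+1) n).filter (fun f => ∀ k, 0 < f k),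
      ∏ k, wgt a (f k))
    = ∑ m ∈ Finset.Icc 1 n, wgt a m *
        ∑ g ∈ (Finset.Nat.antidiagonalTuple l (n-m)).filter (fun g => ∀ k, 0 < g k),
          ∏ k, wgt a (g k) := by
  simp_rw [Finset.mul_sum]
  rw [Finset.sum_sigma']
  refine Finset.sum_nbij' (fun f => ⟨f 0, Fin.tail f⟩) (fun x => Fin.cons x.1 x.2) ?_ ?_ ?_ ?_ ?_
  · intro f hf
    rw [Finset.mem_filter, Finset.Nat.mem_antidiagonalTuple] at hf
    obtain ⟨hsum, hpos⟩ := hf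
    rw [Fin.sum_univ_succ] at hsum
    have h0 : 1 ≤ f 0 := hpos 0
    have hle : f 0 ≤ n := by omega
    have htail : ∑ k, Fin.tail f k = n - f 0 := by
      simp only [Fin.tail]
      omega
    refine Finset.mem_sigma.mpr ⟨Finset.mem_Icc.mpr ⟨h0, hle⟩, ?_⟩
    rw [Finset.mem_filter, Finset.Nat.mem_antidiagonalTuple]
    exact ⟨htail, fun k => hpos k.succ⟩
  · rintro ⟨m, g⟩ hx
    dsimp only at hx ⊢
    rw [Finset.mem_sigma, Finset.mem_Icc, Finset.mem_filter,
      Finset.Nat.mem_antidiagonalTuple] at hx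
    obtain ⟨⟨h1, h2⟩, hsum, hpos⟩ := hx
    rw [Finset.mem_filter, Finset.Nat.mem_antidiagonalTuple, Fin.sum_univ_succ]
    refine ⟨?_, ?_⟩
    · simp only [Fin.cons_zero, Fin.cons_succ]
      have hsum' : ∑ i, g i = n - m := hsum
      have h2' : m ≤ n := h2
      rw [hsum']
      omega
    · intro k
      refine Fin.cases ?_ ?_ k
      · simpa using (show 0 < m from h1)
      · intro k'; simpa using hpos k'
  · intro f _; exact Fin.cons_self_tail f
  · intro x _
    obtain ⟨m, g⟩ := x
    simp [Fin.tail_cons]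
  · intro f _
    rw [Fin.prod_univ_succ]
    rfl

lemma sum_tuple_eq_Tfun (a : ℝ) (l : ℕ) : ∀ n : ℕ,
    (∑ f ∈ (Finset.Nat.antidiagonalTuple l n).filter (fun f => ∀ k, 0 < f k),
      ∏ k, wgt a (f k)) = Tfun a l n := by
  induction l with
  | zero =>
    intro n
    cases n with
    | zero => simp [Tfun_zero]
    | succ n => simp [Tfun_zero]
  | succ l ih =>
    intro n
    rw [sum_tuple_succ, Tfun_succ]
    simp_rw [ih]

lemma genStirling_eq (a : ℝ) (n l : ℕ) :
    genStirling a n l = (n.factorial : ℝ) / (l.factorial : ℝ) * Tfun a l n := by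
  rw [genStirling, ← sum_tuple_eq_Tfun]
  rfl

lemma genStirling_zero_right (a : ℝ) {n : ℕ} (h : 1 ≤ n) : genStirling a n 0 = 0 := by
  rw [genStirling_eq, Tfun_zero, if_neg (by omega), mul_zero]

lemma genStirling_of_lt (a : ℝ) {n l : ℕ} (h : n < l) : genStirling a n l = 0 := by
  rw [genStirling]
  have : ∑ f ∈ (Finset.Nat.antidiagonalTuple l n).filter (fun f => ∀ k, 0 < f k),
      ∏ k, Real.Gamma ((f k : ℝ) - a) / ((f k).factorial * Real.Gamma (1 - a)) = 0 := by
    apply Finset.sum_eq_zero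
    intro f hf
    rw [Finset.mem_filter, Finset.Nat.mem_antidiagonalTuple] at hf
    exfalso
    have hl : l ≤ ∑ k, f k := by
      calc (l : ℕ) = ∑ _k : Fin l, 1 := by simp
      _ ≤ ∑ k, f k := Finset.sum_le_sum fun k _ => hf.2 k
    omega
  rw [this, mul_zero]

lemma wgt_one (a : ℝ) (ha : a < 1) : wgt a 1 = 1 := by
  have h : Real.Gamma (1 - a) ≠ 0 := (Real.Gamma_pos_of_pos (by linarith)).ne'
  simp [wgt, div_self, h]

lemma wgt_succ (a : ℝ) (ha : a < 1) (i : ℕ) :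
    ((i:ℝ) + 2) * wgt a (i + 2) = ((i:ℝ) + 1 - a) * wgt a (i + 1) := by
  have hG : Real.Gamma (1 - a) ≠ 0 := (Real.Gamma_pos_of_pos (by linarith)).ne'
  have hne : ((i:ℝ) + 1) - a ≠ 0 := by
    have : (0:ℝ) ≤ i := Nat.cast_nonneg i
    intro h; linarith [sub_eq_zero.mp h ▸ (by linarith : a < (i:ℝ) + 1)]
  have key : Real.Gamma (((i:ℝ) + 2) - a) = (((i:ℝ) + 1) - a) * Real.Gamma (((i:ℝ) + 1) - a) := by
    have := Real.Gamma_add_one hne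
    rw [← this]; ring_nf
  rw [wgt, wgt]
  have c1 : ((i + 2 : ℕ) : ℝ) - a = ((i:ℝ) + 2) - a := by push_cast; ring
  have c2 : ((i + 1 : ℕ) : ℝ) - a = ((i:ℝ) + 1) - a := by push_cast; ring
  rw [c1, c2, key]
  have hf1 : ((i+1).factorial : ℝ) ≠ 0 := by exact_mod_cast (i+1).factorial_ne_zero
  have hf2 : ((i+2).factorial : ℝ) ≠ 0 := by exact_mod_cast (i+2).factorial_ne_zero
  have hfac : ((i+2).factorial : ℝ) = ((i:ℝ) + 2) * ((i+1).factorial : ℝ) := by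
    rw [show i + 2 = (i+1) + 1 by ring, Nat.factorial_succ]
    push_cast; ring
  rw [hfac]
  field_simp

lemma Tfun_succ' (a : ℝ) (l n : ℕ) :
    Tfun a (l+1) n = ∑ i ∈ Finset.range n, wgt a (1+i) * Tfun a l (n - (1+i)) := by
  rw [Tfun_succ, ← Finset.Ico_add_one_right_eq_Icc, Finset.sum_Ico_eq_sum_range]
  norm_num

lemma Tfun_one (a : ℝ) (m : ℕ) : Tfun a 1 m = if m = 0 then 0 else wgt a m := by
  cases m with
  | zero => simp [Tfun_succ]
  | succ m =>
    rw [Tfun_succ, if_neg (Nat.succ_ne_zero m)]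
    rw [Finset.sum_eq_single (m+1)]
    · rw [Tfun_zero, if_pos (by omega), mul_one]
    · intro k hk hne
      rw [Finset.mem_Icc] at hk
      rw [Tfun_zero, if_neg (by omega), mul_zero]
    · intro h
      exact absurd (Finset.mem_Icc.mpr ⟨by omega, le_refl _⟩) h

lemma Tfun_rec (a : ℝ) (ha : a < 1) (l : ℕ) : ∀ n : ℕ,
    ((n:ℝ) + 1) * Tfun a (l+1) (n+1)
      = ((n:ℝ) - a * ((l:ℝ) + 1)) * Tfun a (l+1) n + ((l:ℝ) + 1) * Tfun a l n := by
  induction l with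
  | zero =>
    intro n
    cases n with
    | zero =>
      simp [Tfun_one, Tfun_zero, wgt_one a ha]
    | succ n =>
      rw [Tfun_one, Tfun_one, Tfun_zero,
        if_neg (by omega : ¬ (n+1)+1 = 0), if_neg (Nat.succ_ne_zero n),
        if_neg (Nat.succ_ne_zero n)]
      have h := wgt_succ a ha n
      rw [show (n+1)+1 = n+2 from rfl]
      push_cast
      linear_combination wgt_succ a ha n
  | succ l ih =>
    intro n
    rw [Tfun_succ' a (l+1) (n+1), Tfun_succ' a (l+1) n, Finset.mul_sum]
    have e1 : ∀ i ∈ Finset.range (n+1),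
        ((n:ℝ)+1) * (wgt a (1+i) * Tfun a (l+1) (n+1-(1+i)))
        = ((i:ℝ)+1) * wgt a (1+i) * Tfun a (l+1) (n-i)
          + wgt a (1+i) * (((n-i:ℕ):ℝ) * Tfun a (l+1) (n-i)) := by
      intro i hi
      rw [Finset.mem_range] at hi
      have hidx : n+1-(1+i) = n-i := by omega
      have hle : i ≤ n := by omega
      have hc : ((n-i:ℕ):ℝ) = (n:ℝ) - (i:ℝ) := by
        rw [Nat.cast_sub hle]
      rw [hidx, hc]; ring
    rw [Finset.sum_congr rfl e1, Finset.sum_add_distrib]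
    have E2 : ∑ i ∈ Finset.range (n+1), ((i:ℝ)+1) * wgt a (1+i) * Tfun a (l+1) (n-i)
        = (∑ i ∈ Finset.range n, ((i:ℝ)+1-a) * wgt a (1+i) * Tfun a (l+1) (n-(1+i)))
          + Tfun a (l+1) n := by
      rw [Finset.sum_range_succ' (fun i => ((i:ℝ)+1) * wgt a (1+i) * Tfun a (l+1) (n-i))]
      congr 1
      · apply Finset.sum_congr rfl
        intro i hi
        rw [show 1 + (i+1) = i+2 from by omega,
          show n - (i+1) = n - (1+i) from by omega]
        have h' : ((i:ℝ)+2) * wgt a (i+2) = ((i:ℝ)+1-a) * wgt a (1+i) := by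
          rw [show 1+i = i+1 from by omega]; exact wgt_succ a ha i
        push_cast
        linear_combination Tfun a (l+1) (n - (1+i)) * h'
      · rw [wgt_one a ha]
        norm_num
    have E3 : ∑ i ∈ Finset.range (n+1), wgt a (1+i) * (((n-i:ℕ):ℝ) * Tfun a (l+1) (n-i))
        = (∑ i ∈ Finset.range n, wgt a (1+i) *
            ((((n-(1+i):ℕ):ℝ) - a*((l:ℝ)+1)) * Tfun a (l+1) (n-(1+i))))
          + ∑ i ∈ Finset.range n, wgt a (1+i) * (((l:ℝ)+1) * Tfun a l (n-(1+i))) := by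
      rw [Finset.sum_range_succ]
      rw [show n - n = 0 from by omega]
      rw [show ((0:ℕ):ℝ) = 0 from Nat.cast_zero, zero_mul, mul_zero, add_zero]
      rw [← Finset.sum_add_distrib]
      apply Finset.sum_congr rfl
      intro i hi
      rw [Finset.mem_range] at hi
      rw [show n - i = (n - (1+i)) + 1 from by omega]
      rw [show ((n - (1+i) + 1 : ℕ):ℝ) = ((n-(1+i):ℕ):ℝ) + 1 from by push_cast; ring]
      rw [ih (n - (1+i))]
      ring
    rw [E2, E3]
    have hS3 : ∑ i ∈ Finset.range n, wgt a (1+i) * (((l:ℝ)+1) * Tfun a l (n-(1+i)))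
        = ((l:ℝ)+1) * Tfun a (l+1) n := by
      rw [Tfun_succ' a l n, Finset.mul_sum]
      apply Finset.sum_congr rfl
      intro i _; ring
    have hS12 : (∑ i ∈ Finset.range n, ((i:ℝ)+1-a) * wgt a (1+i) * Tfun a (l+1) (n-(1+i)))
        + (∑ i ∈ Finset.range n, wgt a (1+i) *
            ((((n-(1+i):ℕ):ℝ) - a*((l:ℝ)+1)) * Tfun a (l+1) (n-(1+i))))
        = ((n:ℝ) - a*((l:ℝ)+2)) *
            ∑ i ∈ Finset.range n, wgt a (1+i) * Tfun a (l+1) (n-(1+i)) := by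
      rw [Finset.mul_sum, ← Finset.sum_add_distrib]
      apply Finset.sum_congr rfl
      intro i hi
      rw [Finset.mem_range] at hi
      have h1 : 1 + i ≤ n := by omega
      rw [show ((n-(1+i):ℕ):ℝ) = (n:ℝ) - 1 - (i:ℝ) from by rw [Nat.cast_sub h1]; push_cast; ring]
      ring
    push_cast
    linear_combination hS12 + hS3

lemma genStirling_rec (a : ℝ) (ha : a < 1) (n l : ℕ) :
    genStirling a (n+1) (l+1)
      = ((n:ℝ) - a * ((l:ℝ)+1)) * genStirling a n (l+1) + genStirling a n l := by
  rw [genStirling_eq, genStirling_eq, genStirling_eq]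
  have hn : ((n+1).factorial : ℝ) = ((n:ℝ)+1) * (n.factorial:ℝ) := by
    rw [Nat.factorial_succ]; push_cast; ring
  have hl : ((l+1).factorial : ℝ) = ((l:ℝ)+1) * (l.factorial:ℝ) := by
    rw [Nat.factorial_succ]; push_cast; ring
  have hlf : (l.factorial:ℝ) ≠ 0 := by exact_mod_cast l.factorial_ne_zero
  have hl1 : ((l:ℝ)+1) ≠ 0 := by positivity
  calc ((n+1).factorial : ℝ) / ((l+1).factorial : ℝ) * Tfun a (l+1) (n+1)
      = ((n.factorial : ℝ) / ((l+1).factorial : ℝ)) * (((n:ℝ)+1) * Tfun a (l+1) (n+1)) := by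
        rw [hn]; ring
    _ = ((n.factorial : ℝ) / ((l+1).factorial : ℝ)) *
          (((n:ℝ) - a * ((l:ℝ)+1)) * Tfun a (l+1) n + ((l:ℝ)+1) * Tfun a l n) := by
        rw [Tfun_rec a ha l n]
    _ = ((n:ℝ) - a * ((l:ℝ)+1)) * ((n.factorial : ℝ) / ((l+1).factorial : ℝ) * Tfun a (l+1) n)
          + (n.factorial : ℝ) / (l.factorial : ℝ) * Tfun a l n := by
        rw [hl]; field_simp

lemma step_lemma (γ0 a p : ℝ) (ha : a < 1) (hp0 : 0 < p) (n i : ℕ)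
    (hi : 1 ≤ i) (hin : i < n) :
    ∑ j ∈ Finset.range (i+1),
        γ0 ^ j * p ^ (-(a * (j:ℝ))) * genStirling a i j * Rrec γ0 a p n i j
    = ∑ j ∈ Finset.range (i+1+1),
        γ0 ^ j * p ^ (-(a * (j:ℝ))) * genStirling a (i+1) j * Rrec γ0 a p n (i+1) j := by
  have hR : ∀ j : ℕ, Rrec γ0 a p n i j
      = ((i : ℝ) - a * (j : ℝ)) * Rrec γ0 a p n (i + 1) j
        + γ0 * p ^ (-a) * Rrec γ0 a p n (i + 1) (j + 1) := by
    intro j; rw [Rrec]; rw [dif_neg (by omega)]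
  have hc : ∀ j : ℕ, γ0 ^ j * p ^ (-(a * (j:ℝ))) * (γ0 * p ^ (-a))
      = γ0 ^ (j+1) * p ^ (-(a * ((j+1:ℕ):ℝ))) := by
    intro j
    rw [pow_succ, show (-(a * ((j+1:ℕ):ℝ))) = (-(a*(j:ℝ))) + (-a) from by push_cast; ring,
      Real.rpow_add hp0]
    ring
  -- common middle expression
  have hL : ∑ j ∈ Finset.range (i+1),
        γ0 ^ j * p ^ (-(a * (j:ℝ))) * genStirling a i j * Rrec γ0 a p n i j
      = (∑ j ∈ Finset.range (i+1), γ0 ^ j * p ^ (-(a * (j:ℝ))) * ((i:ℝ) - a * (j:ℝ))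
            * genStirling a i j * Rrec γ0 a p n (i+1) j)
        + ∑ j ∈ Finset.range (i+1), γ0 ^ (j+1) * p ^ (-(a * ((j+1:ℕ):ℝ)))
            * genStirling a i j * Rrec γ0 a p n (i+1) (j+1) := by
    rw [← Finset.sum_add_distrib]
    refine Finset.sum_congr rfl fun j _ => ?_
    rw [hR j, ← hc j]
    ring
  have hshift : ∑ j ∈ Finset.range (i+1), γ0 ^ (j+1) * p ^ (-(a * ((j+1:ℕ):ℝ)))
          * ((i:ℝ) - a * ((j+1:ℕ):ℝ)) * genStirling a i (j+1) * Rrec γ0 a p n (i+1) (j+1)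
      = ∑ j ∈ Finset.range (i+1), γ0 ^ j * p ^ (-(a * (j:ℝ)))
          * ((i:ℝ) - a * (j:ℝ)) * genStirling a i j * Rrec γ0 a p n (i+1) j := by
    set G : ℕ → ℝ := fun j => γ0 ^ j * p ^ (-(a * (j:ℝ))) * ((i:ℝ) - a * (j:ℝ))
        * genStirling a i j * Rrec γ0 a p n (i+1) j with hGdef
    have h1 := Finset.sum_range_succ G (i+1)
    have h2 := Finset.sum_range_succ' G (i+1)
    have hG0' : G 0 = 0 := by
      simp only [hGdef]
      rw [genStirling_zero_right a hi]
      ring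
    have hGtop : G (i+1) = 0 := by
      simp only [hGdef]
      rw [genStirling_of_lt a (by omega : i < i+1)]
      ring
    have : (∑ j ∈ Finset.range (i+1), G (j+1)) = ∑ j ∈ Finset.range (i+1), G j := by
      rw [hGtop] at h1; rw [hG0'] at h2; linarith
    exact this
  have hRHS : ∑ j ∈ Finset.range (i+1+1),
        γ0 ^ j * p ^ (-(a * (j:ℝ))) * genStirling a (i+1) j * Rrec γ0 a p n (i+1) j
      = (∑ j ∈ Finset.range (i+1), γ0 ^ (j+1) * p ^ (-(a * ((j+1:ℕ):ℝ)))
            * ((i:ℝ) - a * ((j+1:ℕ):ℝ)) * genStirling a i (j+1) * Rrec γ0 a p n (i+1) (j+1))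
        + ∑ j ∈ Finset.range (i+1), γ0 ^ (j+1) * p ^ (-(a * ((j+1:ℕ):ℝ)))
            * genStirling a i j * Rrec γ0 a p n (i+1) (j+1) := by
    rw [Finset.sum_range_succ'
      (fun j => γ0 ^ j * p ^ (-(a * (j:ℝ))) * genStirling a (i+1) j * Rrec γ0 a p n (i+1) j)
      (i+1)]
    rw [genStirling_zero_right a (by omega : 1 ≤ i+1)]
    rw [mul_zero, zero_mul, add_zero]
    rw [← Finset.sum_add_distrib]
    refine Finset.sum_congr rfl fun j _ => ?_
    have hrec := genStirling_rec a ha i j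
    have hcast : ((j+1:ℕ):ℝ) = (j:ℝ) + 1 := by push_cast; ring
    rw [hcast, hrec]
    ring
  rw [hL, hRHS, hshift]

/-- For γ0 > 0, a < 1, 0 < p < 1 and 1 ≤ i ≤ n:
Σ_{j=0}^{i} γ0^j·p^{−a·j}·S_a(i,j)·R_{n,γ0,a,p}(i,j) = Σ_{ℓ=0}^n γ0^ℓ·p^{−a·ℓ}·S_a(n,ℓ). -/
theorem Rrec_partial_sum_identity (γ0 a p : ℝ) (hγ : 0 < γ0) (ha : a < 1)
    (hp0 : 0 < p) (hp1 : p < 1) (i n : ℕ) (hi : 1 ≤ i) (hin : i ≤ n) :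
    ∑ j ∈ Finset.range (i + 1),
        γ0 ^ j * p ^ (-(a * (j : ℝ))) * genStirling a i j * Rrec γ0 a p n i j
      = Dsum γ0 a p n := by
  have key : ∀ k i0, 1 ≤ i0 → i0 + k = n →
      (∑ j ∈ Finset.range (i0+1),
        γ0 ^ j * p ^ (-(a * (j:ℝ))) * genStirling a i0 j * Rrec γ0 a p n i0 j)
      = Dsum γ0 a p n := by
    intro k
    induction k with
    | zero =>
      intro i0 hi0 hik
      have hieq : i0 = n := by omega
      subst hieq
      rw [Dsum]
      refine Finset.sum_congr rfl fun j _ => ?_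
      rw [show Rrec γ0 a p i0 i0 j = 1 from by rw [Rrec]; rw [dif_pos le_rfl], mul_one]
    | succ k ihk =>
      intro i0 hi0 hik
      rw [step_lemma γ0 a p ha hp0 n i0 hi0 (by omega)]
      exact ihk (i0+1) (by omega) (by omega)
  exact key (n - i) i hi (by omega)
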